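/- For n ≥ 6, let CC(n) be the probability distribution on simple graphs with vertex set {1,...,n} defined as follows: with probability 1/2 sample an Erdős–Rényi graph G(n, 1/2) (each edge present independently with probability 1/2); otherwise assign each vertex independently and uniformly to one of two sets A, B and output the graph that is the disjoint union of a clique on A and a clique on B. Then CC(n) is edge-subgraph independent but not subgraph independent. -/

import Mathlib

open scoped Classical

noncomputable def pr {n : ℕ} (μ : SimpleGraph (Fin n) → ℝ) (P : SimpleGraph (Fin n) → Prop) : ℝ :=
  ∑ G : SimpleGraph (Fin n), if P G then μ G else 0

def IsDist {n : ℕ} (μ : SimpleGraph (Fin n) → ℝ) : Prop :=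
  (∀ G, 0 ≤ μ G) ∧ ∑ G : SimpleGraph (Fin n), μ G = 1

def EdgeSubgraphIndep {n : ℕ} (μ : SimpleGraph (Fin n) → ℝ) : Prop :=
  ∀ u v : Fin n, u ≠ v → ∀ W : Set (Fin n), u ∉ W → v ∉ W →
    ∀ H : SimpleGraph W,
      pr μ (fun G => G.induce W = H ∧ G.Adj u v)
        = pr μ (fun G => G.induce W = H) * pr μ (fun G => G.Adj u v)

def SubgraphIndep {n : ℕ} (μ : SimpleGraph (Fin n) → ℝ) : Prop :=
  ∀ V W : Set (Fin n), Disjoint V W →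
    ∀ (HV : SimpleGraph V) (HW : SimpleGraph W),
      pr μ (fun G => G.induce V = HV ∧ G.induce W = HW)
        = pr μ (fun G => G.induce V = HV) * pr μ (fun G => G.induce W = HW)

def cliqueGraph {n : ℕ} (c : Fin n → Bool) : SimpleGraph (Fin n) where
  Adj u v := u ≠ v ∧ c u = c v
  symm := ⟨fun u v h => ⟨h.1.symm, h.2.symm⟩⟩
  loopless := ⟨fun u h => h.1 rfl⟩

noncomputable def CC (n : ℕ) : SimpleGraph (Fin n) → ℝ := fun G =>
  (1 / 2) * (1 / 2 : ℝ) ^ (n.choose 2)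
    + (1 / 2) *
      (((Finset.univ.filter (fun c : Fin n → Bool => cliqueGraph c = G)).card : ℝ) / 2 ^ n)

namespace CCaux


variable {n : ℕ}

/-- toggle the edge between `u` and `v`. -/
def toggle (u v : Fin n) (G : SimpleGraph (Fin n)) : SimpleGraph (Fin n) where
  Adj a b := if s(a, b) = s(u, v) then a ≠ b ∧ ¬ G.Adj a b else G.Adj a b
  symm := by
    constructor
    intro a b h
    by_cases hc : s(a, b) = s(u, v)
    · rw [if_pos hc] at h
      rw [if_pos (by rwa [Sym2.eq_swap])]
      exact ⟨h.1.symm, fun hba => h.2 hba.symm⟩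
    · rw [if_neg hc] at h
      rw [if_neg (by rwa [Sym2.eq_swap])]
      exact h.symm
  loopless := by
    constructor
    intro a h
    by_cases hc : s(a, a) = s(u, v)
    · rw [if_pos hc] at h; exact h.1 rfl
    · rw [if_neg hc] at h; exact G.loopless.irrefl a h

lemma toggle_adj (u v a b : Fin n) (G : SimpleGraph (Fin n)) :
    (toggle u v G).Adj a b ↔
      if s(a, b) = s(u, v) then a ≠ b ∧ ¬ G.Adj a b else G.Adj a b := Iff.rfl

lemma toggle_adj_uv {u v : Fin n} (huv : u ≠ v) (G : SimpleGraph (Fin n)) :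
    (toggle u v G).Adj u v ↔ ¬ G.Adj u v := by
  rw [toggle_adj, if_pos rfl]
  simp [huv]

lemma toggle_adj_of_ne {u v a b : Fin n} (G : SimpleGraph (Fin n))
    (h : s(a, b) ≠ s(u, v)) :
    (toggle u v G).Adj a b ↔ G.Adj a b := by
  rw [toggle_adj, if_neg h]

lemma toggle_adj_left {u v a b : Fin n} (G : SimpleGraph (Fin n))
    (hau : a ≠ u) (hav : a ≠ v) :
    (toggle u v G).Adj a b ↔ G.Adj a b :=
  toggle_adj_of_ne G (by
    intro hEq
    rw [Sym2.eq_iff] at hEq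
    rcases hEq with ⟨h, -⟩ | ⟨h, -⟩
    exacts [hau h, hav h])

lemma toggle_adj_right {u v a b : Fin n} (G : SimpleGraph (Fin n))
    (hbu : b ≠ u) (hbv : b ≠ v) :
    (toggle u v G).Adj a b ↔ G.Adj a b :=
  toggle_adj_of_ne G (by
    intro hEq
    rw [Sym2.eq_iff] at hEq
    rcases hEq with ⟨-, h⟩ | ⟨-, h⟩
    exacts [hbv h, hbu h])

lemma toggle_involutive (u v : Fin n) : Function.Involutive (toggle u v) := by
  intro G
  ext a b
  show (if s(a, b) = s(u, v) then a ≠ b ∧ ¬ (toggle u v G).Adj a b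
      else (toggle u v G).Adj a b) ↔ G.Adj a b
  by_cases hc : s(a, b) = s(u, v)
  · rw [if_pos hc, show (toggle u v G).Adj a b ↔ (a ≠ b ∧ ¬ G.Adj a b) from by
      rw [toggle_adj, if_pos hc]]
    have hne : G.Adj a b → a ≠ b := G.ne_of_adj
    tauto
  · rw [if_neg hc, toggle_adj, if_neg hc]

lemma toggle_induce {u v : Fin n} {W : Set (Fin n)} (hu : u ∉ W) (hv : v ∉ W)
    (G : SimpleGraph (Fin n)) : (toggle u v G).induce W = G.induce W := by
  ext ⟨a, ha⟩ ⟨b, hb⟩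
  simp only [SimpleGraph.induce, SimpleGraph.comap_adj, Function.Embedding.coe_subtype]
  exact toggle_adj_of_ne G (by
    intro hEq
    rw [Sym2.eq_iff] at hEq
    rcases hEq with ⟨rfl, rfl⟩ | ⟨rfl, rfl⟩
    exacts [hu ha, hv ha])

/-- flip the colour of vertex `u`. -/
def flip (u : Fin n) (c : Fin n → Bool) : Fin n → Bool := fun i =>
  if i = u then !(c i) else c i

lemma flip_self (u : Fin n) (c : Fin n → Bool) : flip u c u = !(c u) := by simp [flip]

lemma flip_ne {u i : Fin n} (c : Fin n → Bool) (h : i ≠ u) : flip u c i = c i := by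
  simp [flip, h]

lemma flip_involutive (u : Fin n) : Function.Involutive (flip u) := by
  intro c; funext i; by_cases h : i = u <;> simp [flip, h]

lemma cliqueGraph_adj {c : Fin n → Bool} {a b : Fin n} :
    (cliqueGraph c).Adj a b ↔ a ≠ b ∧ c a = c b := Iff.rfl

lemma cliqueGraph_induce_congr {W : Set (Fin n)} {c c' : Fin n → Bool}
    (h : ∀ i ∈ W, c i = c' i) :
    (cliqueGraph c).induce W = (cliqueGraph c').induce W := by
  ext ⟨a, ha⟩ ⟨b, hb⟩
  simp only [SimpleGraph.induce, SimpleGraph.comap_adj, Function.Embedding.coe_subtype,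
    cliqueGraph_adj, h a ha, h b hb]

lemma half {α : Type*} [Fintype α] (τ : α → α) (hτ : Function.Involutive τ)
    (P B : α → Prop) (hP : ∀ a, P (τ a) ↔ P a) (hB : ∀ a, B (τ a) ↔ ¬ B a) :
    (∑ a : α, @ite ℝ (P a ∧ B a) (Classical.propDecidable _) 1 0) * 2
      = ∑ a : α, @ite ℝ (P a) (Classical.propDecidable _) 1 0 := by
  have h1 : (∑ a : α, @ite ℝ (P a ∧ B a) (Classical.propDecidable _) 1 0)
      = ∑ a : α, @ite ℝ (P a ∧ ¬ B a) (Classical.propDecidable _) 1 0 := by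
    rw [← Equiv.sum_comp (Function.Involutive.toPerm τ hτ)
      (fun a => @ite ℝ (P a ∧ ¬ B a) (Classical.propDecidable _) 1 0)]
    refine Finset.sum_congr rfl fun a _ => ?_
    have hco : Function.Involutive.toPerm τ hτ a = τ a := rfl
    rw [hco]
    exact @if_congr ℝ _ _ (Classical.propDecidable _) (Classical.propDecidable _) 1 0 1 0
      (by rw [hP, hB]; tauto) rfl rfl
  rw [mul_two]
  nth_rewrite 2 [h1]
  rw [← Finset.sum_add_distrib]
  refine Finset.sum_congr rfl fun a _ => ?_
  rcases Classical.em (P a) with hp | hp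
  · rcases Classical.em (B a) with hb | hb
    · rw [if_pos (⟨hp, hb⟩ : P a ∧ B a), if_pos hp, if_neg (fun h : P a ∧ ¬ B a => h.2 hb)]
      norm_num
    · rw [if_neg (fun h : P a ∧ B a => hb h.2), if_pos hp, if_pos (⟨hp, hb⟩ : P a ∧ ¬ B a)]
      norm_num
  · rw [if_neg (fun h : P a ∧ B a => hp h.1), if_neg (fun h : P a ∧ ¬ B a => hp h.1),
      if_neg hp]
    norm_num



variable {n : ℕ}

noncomputable def Sev (n : ℕ) (P : SimpleGraph (Fin n) → Prop) : ℝ :=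
  ∑ G : SimpleGraph (Fin n), if P G then 1 else 0

noncomputable def Cev (n : ℕ) (Q : (Fin n → Bool) → Prop) : ℝ :=
  ∑ c : Fin n → Bool, if Q c then 1 else 0

lemma Sev_congr {P Q : SimpleGraph (Fin n) → Prop} (h : ∀ G, P G ↔ Q G) :
    Sev n P = Sev n Q :=
  Finset.sum_congr rfl fun G _ => if_congr (h G) rfl rfl

lemma Cev_congr {P Q : (Fin n → Bool) → Prop} (h : ∀ c, P c ↔ Q c) :
    Cev n P = Cev n Q :=
  Finset.sum_congr rfl fun c _ => if_congr (h c) rfl rfl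

lemma pr_congr (μ : SimpleGraph (Fin n) → ℝ) {P Q : SimpleGraph (Fin n) → Prop}
    (h : ∀ G, P G ↔ Q G) : pr μ P = pr μ Q :=
  Finset.sum_congr rfl fun G _ => if_congr (h G) rfl rfl

noncomputable def graphEquiv (n : ℕ) :
    SimpleGraph (Fin n) ≃ ({ z : Sym2 (Fin n) // ¬ z.IsDiag } → Bool) where
  toFun G z := decide (z.1 ∈ G.edgeSet)
  invFun f := SimpleGraph.fromEdgeSet {e | ∃ h : ¬ e.IsDiag, f ⟨e, h⟩ = true}
  left_inv G := by
    ext a b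
    rw [SimpleGraph.fromEdgeSet_adj]
    simp only [Set.mem_setOf_eq, decide_eq_true_eq, SimpleGraph.mem_edgeSet]
    constructor
    · rintro ⟨⟨h, hm⟩, hab⟩
      exact hm
    · intro h
      exact ⟨⟨by simp only [Sym2.mk_isDiag_iff]; exact h.ne, h⟩, h.ne⟩
  right_inv f := by
    funext z
    obtain ⟨e, hd⟩ := z
    induction e using Sym2.ind with
    | _ a b =>
      have hab : a ≠ b := by simpa [Sym2.mk_isDiag_iff] using hd
      have hmem : (s(a, b) ∈ (SimpleGraph.fromEdgeSet
            {e | ∃ h : ¬ e.IsDiag, f ⟨e, h⟩ = true}).edgeSet)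
          ↔ (f ⟨s(a, b), hd⟩ = true) := by
        rw [SimpleGraph.mem_edgeSet, SimpleGraph.fromEdgeSet_adj]
        exact ⟨fun ⟨⟨_, hh⟩, _⟩ => hh, fun hh => ⟨⟨hd, hh⟩, hab⟩⟩
      dsimp only [Equiv.coe_fn_mk]
      rw [Bool.eq_iff_iff]
      exact ((fun (p : Prop) (i : Decidable p) => @decide_eq_true_iff p i) _ _).trans hmem

lemma card_simpleGraph (n : ℕ) :
    Fintype.card (SimpleGraph (Fin n)) = 2 ^ n.choose 2 := by
  rw [Fintype.card_congr (graphEquiv n), Fintype.card_fun, Sym2.card_subtype_not_diag,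
    Fintype.card_bool, Fintype.card_fin]

lemma Sev_true : Sev n (fun _ => True) = 2 ^ n.choose 2 := by
  rw [Sev]
  simp only [if_pos trivial, Finset.sum_const, Finset.card_univ, nsmul_eq_mul, mul_one]
  rw [card_simpleGraph]
  push_cast
  ring

lemma Cev_true : Cev n (fun _ => True) = 2 ^ n := by
  rw [Cev]
  simp only [if_pos trivial, Finset.sum_const, Finset.card_univ, nsmul_eq_mul, mul_one]
  rw [Fintype.card_fun, Fintype.card_bool, Fintype.card_fin]
  push_cast
  ring

lemma pr_split (P : SimpleGraph (Fin n) → Prop) :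
    pr (CC n) P
      = 1 / 2 * (1 / 2 : ℝ) ^ (n.choose 2) * Sev n P
        + 1 / 2 * (Cev n (fun c => P (cliqueGraph c)) / 2 ^ n) := by
  have key : (∑ G : SimpleGraph (Fin n),
        (if P G then ((Finset.univ.filter (fun c : Fin n → Bool => cliqueGraph c = G)).card : ℝ) else 0))
      = Cev n (fun c => P (cliqueGraph c)) := by
    have h := Finset.sum_fiberwise' (Finset.univ : Finset (Fin n → Bool))
      (fun c => cliqueGraph c) (fun G => if P G then (1 : ℝ) else 0)
    rw [Cev, ← h]
    refine Finset.sum_congr rfl fun G _ => ?_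
    rw [Finset.sum_const, nsmul_eq_mul, mul_ite, mul_one, mul_zero]
  rw [pr, ← key, Sev, Finset.mul_sum, Finset.sum_div, Finset.mul_sum,
    ← Finset.sum_add_distrib]
  refine Finset.sum_congr rfl fun G _ => ?_
  by_cases h : P G <;> simp only [h, if_true, if_false, CC] <;> ring

lemma Sev_strip (u v : Fin n) (huv : u ≠ v) (P : SimpleGraph (Fin n) → Prop)
    (hP : ∀ G, P (toggle u v G) ↔ P G) :
    Sev n (fun G => P G ∧ G.Adj u v) * 2 = Sev n P := by
  unfold Sev
  exact half (toggle u v) (toggle_involutive u v) P (fun G => G.Adj u v) hP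
    (fun G => toggle_adj_uv huv G)

lemma Sev_adj (u v : Fin n) (huv : u ≠ v) :
    Sev n (fun G => G.Adj u v) * 2 = 2 ^ n.choose 2 := by
  have h := Sev_strip u v huv (fun _ => True) (fun _ => Iff.rfl)
  rw [Sev_true] at h
  calc Sev n (fun G => G.Adj u v) * 2
      = Sev n (fun G => True ∧ G.Adj u v) * 2 := by
        rw [Sev_congr (fun G => (iff_of_eq (true_and (G.Adj u v))).symm)]
    _ = 2 ^ n.choose 2 := h

lemma Cev_strip_eq (a u : Fin n) (hau : a ≠ u) (Q : (Fin n → Bool) → Prop)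
    (hQ : ∀ c, Q (flip u c) ↔ Q c) :
    Cev n (fun c => Q c ∧ c a = c u) * 2 = Cev n Q := by
  unfold Cev
  exact half (flip u) (flip_involutive u) Q (fun c => c a = c u) hQ (fun c => by
    show flip u c a = flip u c u ↔ ¬(c a = c u)
    rw [flip_self, flip_ne c hau]
    cases hca : c a <;> cases hcu : c u <;> simp)

lemma Cev_eq (a u : Fin n) (hau : a ≠ u) :
    Cev n (fun c => c a = c u) * 2 = 2 ^ n := by
  have h := Cev_strip_eq a u hau (fun _ => True) (fun _ => Iff.rfl)
  rw [Cev_true] at h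
  calc Cev n (fun c => c a = c u) * 2
      = Cev n (fun c => True ∧ c a = c u) * 2 := by
        rw [Cev_congr (fun c => (iff_of_eq (true_and (c a = c u))).symm)]
    _ = 2 ^ n := h

lemma half_pow_mul (k : ℕ) : ((1 : ℝ) / 2) ^ k * 2 ^ k = 1 := by
  rw [one_div, inv_pow, inv_mul_cancel₀ (by positivity)]

lemma pr_adj (u v : Fin n) (huv : u ≠ v) :
    pr (CC n) (fun G => G.Adj u v) = 1 / 2 := by
  have hS2 := Sev_adj u v huv
  have hT2 : Cev n (fun c => (cliqueGraph c).Adj u v) * 2 = 2 ^ n := by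
    have h1 : Cev n (fun c => (cliqueGraph c).Adj u v) = Cev n (fun c => c u = c v) :=
      Cev_congr (fun c => by rw [cliqueGraph_adj]; simp [huv])
    rw [h1]
    exact Cev_eq u v huv
  rw [pr_split,
    show Sev n (fun G => G.Adj u v) = 2 ^ n.choose 2 / 2 from by linarith,
    show Cev n (fun c => (cliqueGraph c).Adj u v) = 2 ^ n / 2 from by linarith]
  have h2 := half_pow_mul (n.choose 2)
  have h2n : ((2 : ℝ)) ^ n ≠ 0 := by positivity
  field_simp
  nlinarith [h2]

lemma pr_tri (a b c : Fin n) (hab : a ≠ b) (hac : a ≠ c) (hbc : b ≠ c) :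
    pr (CC n) (fun G => (G.Adj a b ∧ G.Adj a c) ∧ G.Adj b c) = 3 / 16 := by
  have hS3 : Sev n (fun G => (G.Adj a b ∧ G.Adj a c) ∧ G.Adj b c) * 2
      = Sev n (fun G => G.Adj a b ∧ G.Adj a c) :=
    Sev_strip b c hbc _ (fun G => by simp only [toggle_adj_left G hab hac])
  have hS2 : Sev n (fun G => G.Adj a b ∧ G.Adj a c) * 2 = Sev n (fun G => G.Adj a b) :=
    Sev_strip a c hac _ (fun G => by simp only [toggle_adj_right G hab.symm hbc])
  have hS1 := Sev_adj a b hab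
  have hT : Cev n (fun cc => (fun G => (G.Adj a b ∧ G.Adj a c) ∧ G.Adj b c) (cliqueGraph cc))
      = Cev n (fun cc => (cc a = cc b) ∧ (cc b = cc c)) :=
    Cev_congr (fun cc => by
      simp only [cliqueGraph_adj]
      constructor
      · rintro ⟨⟨⟨-, h1⟩, ⟨-, h2⟩⟩, ⟨-, h3⟩⟩; exact ⟨h1, h3⟩
      · rintro ⟨h1, h3⟩; exact ⟨⟨⟨hab, h1⟩, ⟨hac, h1.trans h3⟩⟩, ⟨hbc, h3⟩⟩)
  have hT2 : Cev n (fun cc => (cc a = cc b) ∧ (cc b = cc c)) * 2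
      = Cev n (fun cc => cc a = cc b) :=
    Cev_strip_eq b c hbc _ (fun cc => by rw [flip_ne cc hac, flip_ne cc hbc])
  have hT1 := Cev_eq a b hab
  rw [pr_split, hT,
    show Sev n (fun G => (G.Adj a b ∧ G.Adj a c) ∧ G.Adj b c) = 2 ^ n.choose 2 / 8 from by
      linarith,
    show Cev n (fun cc => (cc a = cc b) ∧ (cc b = cc c)) = 2 ^ n / 4 from by linarith]
  have h2 := half_pow_mul (n.choose 2)
  have h2n : ((2 : ℝ)) ^ n ≠ 0 := by positivity
  field_simp
  nlinarith [h2]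

lemma pr_two_tri (a b c d e f : Fin n)
    (hab : a ≠ b) (hac : a ≠ c) (had : a ≠ d) (hae : a ≠ e) (haf : a ≠ f)
    (hbc : b ≠ c) (hbd : b ≠ d) (hbe : b ≠ e) (hbf : b ≠ f)
    (hcd : c ≠ d) (hce : c ≠ e) (hcf : c ≠ f)
    (hde : d ≠ e) (hdf : d ≠ f) (hef : e ≠ f) :
    pr (CC n) (fun G => ((((G.Adj a b ∧ G.Adj a c) ∧ G.Adj b c) ∧ G.Adj d e)
        ∧ G.Adj d f) ∧ G.Adj e f) = 5 / 128 := by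
  have hS6 : Sev n (fun G => ((((G.Adj a b ∧ G.Adj a c) ∧ G.Adj b c) ∧ G.Adj d e)
        ∧ G.Adj d f) ∧ G.Adj e f) * 2
      = Sev n (fun G => (((G.Adj a b ∧ G.Adj a c) ∧ G.Adj b c) ∧ G.Adj d e) ∧ G.Adj d f) :=
    Sev_strip e f hef _ (fun G => by
      simp only [toggle_adj_left G hae haf, toggle_adj_left G hbe hbf,
        toggle_adj_left G hde hdf])
  have hS5 : Sev n (fun G => (((G.Adj a b ∧ G.Adj a c) ∧ G.Adj b c) ∧ G.Adj d e)
        ∧ G.Adj d f) * 2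
      = Sev n (fun G => ((G.Adj a b ∧ G.Adj a c) ∧ G.Adj b c) ∧ G.Adj d e) :=
    Sev_strip d f hdf _ (fun G => by
      simp only [toggle_adj_left G had haf, toggle_adj_left G hbd hbf,
        toggle_adj_right G hde.symm hef])
  have hS4 : Sev n (fun G => ((G.Adj a b ∧ G.Adj a c) ∧ G.Adj b c) ∧ G.Adj d e) * 2
      = Sev n (fun G => (G.Adj a b ∧ G.Adj a c) ∧ G.Adj b c) :=
    Sev_strip d e hde _ (fun G => by
      simp only [toggle_adj_left G had hae, toggle_adj_left G hbd hbe])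
  have hS3 : Sev n (fun G => (G.Adj a b ∧ G.Adj a c) ∧ G.Adj b c) * 2
      = Sev n (fun G => G.Adj a b ∧ G.Adj a c) :=
    Sev_strip b c hbc _ (fun G => by simp only [toggle_adj_left G hab hac])
  have hS2 : Sev n (fun G => G.Adj a b ∧ G.Adj a c) * 2 = Sev n (fun G => G.Adj a b) :=
    Sev_strip a c hac _ (fun G => by simp only [toggle_adj_right G hab.symm hbc])
  have hS1 := Sev_adj a b hab
  have hT : Cev n (fun cc => (fun G => ((((G.Adj a b ∧ G.Adj a c) ∧ G.Adj b c) ∧ G.Adj d e)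
        ∧ G.Adj d f) ∧ G.Adj e f) (cliqueGraph cc))
      = Cev n (fun cc => (((cc a = cc b ∧ cc b = cc c) ∧ cc d = cc e) ∧ cc e = cc f)) :=
    Cev_congr (fun cc => by
      simp only [cliqueGraph_adj]
      constructor
      · rintro ⟨⟨⟨⟨⟨⟨-, h1⟩, -⟩, ⟨-, h3⟩⟩, ⟨-, h4⟩⟩, -⟩, ⟨-, h6⟩⟩
        exact ⟨⟨⟨h1, h3⟩, h4⟩, h6⟩
      · rintro ⟨⟨⟨h1, h3⟩, h4⟩, h6⟩
        exact ⟨⟨⟨⟨⟨⟨hab, h1⟩, ⟨hac, h1.trans h3⟩⟩, ⟨hbc, h3⟩⟩, ⟨hde, h4⟩⟩,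
          ⟨hdf, h4.trans h6⟩⟩, ⟨hef, h6⟩⟩)
  have hT4 : Cev n (fun cc => (((cc a = cc b ∧ cc b = cc c) ∧ cc d = cc e) ∧ cc e = cc f)) * 2
      = Cev n (fun cc => ((cc a = cc b ∧ cc b = cc c) ∧ cc d = cc e)) :=
    Cev_strip_eq e f hef _ (fun cc => by
      rw [flip_ne cc haf, flip_ne cc hbf, flip_ne cc hcf, flip_ne cc hdf, flip_ne cc hef])
  have hT3 : Cev n (fun cc => ((cc a = cc b ∧ cc b = cc c) ∧ cc d = cc e)) * 2
      = Cev n (fun cc => (cc a = cc b ∧ cc b = cc c)) :=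
    Cev_strip_eq d e hde _ (fun cc => by
      rw [flip_ne cc hae, flip_ne cc hbe, flip_ne cc hce])
  have hT2 : Cev n (fun cc => (cc a = cc b ∧ cc b = cc c)) * 2
      = Cev n (fun cc => cc a = cc b) :=
    Cev_strip_eq b c hbc _ (fun cc => by rw [flip_ne cc hac, flip_ne cc hbc])
  have hT1 := Cev_eq a b hab
  rw [pr_split, hT,
    show Sev n (fun G => ((((G.Adj a b ∧ G.Adj a c) ∧ G.Adj b c) ∧ G.Adj d e)
        ∧ G.Adj d f) ∧ G.Adj e f) = 2 ^ n.choose 2 / 64 from by linarith,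
    show Cev n (fun cc => (((cc a = cc b ∧ cc b = cc c) ∧ cc d = cc e) ∧ cc e = cc f))
        = 2 ^ n / 16 from by linarith]
  have h2 := half_pow_mul (n.choose 2)
  have h2n : ((2 : ℝ)) ^ n ≠ 0 := by positivity
  field_simp
  nlinarith [h2]

lemma induce_triple_top_iff (a b c : Fin n) (hab : a ≠ b) (hac : a ≠ c) (hbc : b ≠ c)
    (G : SimpleGraph (Fin n)) :
    G.induce ({a, b, c} : Set (Fin n)) = (⊤ : SimpleGraph ({a, b, c} : Set (Fin n)))
      ↔ (G.Adj a b ∧ G.Adj a c) ∧ G.Adj b c := by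
  have ma : a ∈ ({a, b, c} : Set (Fin n)) := by simp
  have mb : b ∈ ({a, b, c} : Set (Fin n)) := by simp
  have mc : c ∈ ({a, b, c} : Set (Fin n)) := by simp
  constructor
  · intro hG
    have key : ∀ (x y : Fin n) (hx : x ∈ ({a, b, c} : Set (Fin n)))
        (hy : y ∈ ({a, b, c} : Set (Fin n))), x ≠ y → G.Adj x y := by
      intro x y hx hy hxy
      have h2 : (G.induce ({a, b, c} : Set (Fin n))).Adj ⟨x, hx⟩ ⟨y, hy⟩ := by
        rw [hG, SimpleGraph.top_adj]
        exact fun hEq => hxy (congrArg Subtype.val hEq)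
      simpa using h2
    exact ⟨⟨key a b ma mb hab, key a c ma mc hac⟩, key b c mb mc hbc⟩
  · rintro ⟨⟨h1, h2⟩, h3⟩
    ext ⟨x, hx⟩ ⟨y, hy⟩
    simp only [SimpleGraph.induce, SimpleGraph.comap_adj, Function.Embedding.coe_subtype,
      SimpleGraph.top_adj, ne_eq, Subtype.mk.injEq]
    constructor
    · exact fun h => G.ne_of_adj h
    · intro hxy
      simp only [Set.mem_insert_iff, Set.mem_singleton_iff] at hx hy
      rcases hx with rfl | rfl | rfl <;> rcases hy with rfl | rfl | rfl <;>
        first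
          | exact absurd rfl hxy
          | assumption
          | exact h1.symm
          | exact h2.symm
          | exact h3.symm

lemma mkne {i j : ℕ} (hi : i < n) (hj : j < n) (h : i ≠ j) :
    (⟨i, hi⟩ : Fin n) ≠ ⟨j, hj⟩ :=
  fun e => h (congrArg Fin.val e)

end CCaux

theorem CC_edge_subgraph_not_subgraph (n : ℕ) (hn : 6 ≤ n) :
    EdgeSubgraphIndep (CC n) ∧ ¬ SubgraphIndep (CC n) := by
  open CCaux in
  constructor
  · intro u v huv W hu hv H
    have hS : Sev n (fun G => G.induce W = H ∧ G.Adj u v) * 2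
        = Sev n (fun G => G.induce W = H) :=
      Sev_strip u v huv _ (fun G => by rw [toggle_induce hu hv])
    have hT : Cev n (fun c => (cliqueGraph c).induce W = H ∧ (cliqueGraph c).Adj u v) * 2
        = Cev n (fun c => (cliqueGraph c).induce W = H) :=
      half (flip u) (flip_involutive u) _ _
        (fun c => by
          rw [cliqueGraph_induce_congr (fun i hi => flip_ne c (fun hEq => hu (by rw [hEq] at hi; exact hi)))])
        (fun c => by
          rw [cliqueGraph_adj, cliqueGraph_adj, flip_self, flip_ne c (Ne.symm huv)]
          cases hcu : c u <;> cases hcv : c v <;> simp [huv, hcu, hcv])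
    rw [pr_adj u v huv]
    simp only [pr_split]
    rw [← hS, ← hT]
    ring
  · intro hSub
    obtain ⟨a, b, c, d, e, f, hab, hac, had, hae, haf, hbc, hbd, hbe, hbf, hcd, hce, hcf,
        hde, hdf, hef⟩ :
        ∃ a b c d e f : Fin n, a ≠ b ∧ a ≠ c ∧ a ≠ d ∧ a ≠ e ∧ a ≠ f ∧ b ≠ c ∧ b ≠ d ∧
          b ≠ e ∧ b ≠ f ∧ c ≠ d ∧ c ≠ e ∧ c ≠ f ∧ d ≠ e ∧ d ≠ f ∧ e ≠ f :=
      ⟨⟨0, by omega⟩, ⟨1, by omega⟩, ⟨2, by omega⟩, ⟨3, by omega⟩, ⟨4, by omega⟩,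
        ⟨5, by omega⟩,
        mkne _ _ (by norm_num), mkne _ _ (by norm_num), mkne _ _ (by norm_num),
        mkne _ _ (by norm_num), mkne _ _ (by norm_num), mkne _ _ (by norm_num),
        mkne _ _ (by norm_num), mkne _ _ (by norm_num), mkne _ _ (by norm_num),
        mkne _ _ (by norm_num), mkne _ _ (by norm_num), mkne _ _ (by norm_num),
        mkne _ _ (by norm_num), mkne _ _ (by norm_num), mkne _ _ (by norm_num)⟩
    have hdisj : Disjoint ({a, b, c} : Set (Fin n)) ({d, e, f} : Set (Fin n)) := by
      refine Set.disjoint_left.mpr ?_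
      intro x hx hx'
      simp only [Set.mem_insert_iff, Set.mem_singleton_iff] at hx hx'
      rcases hx with rfl | rfl | rfl <;> rcases hx' with h | h | h <;> tauto
    have key := hSub {a, b, c} {d, e, f} hdisj ⊤ ⊤
    have e1 : pr (CC n) (fun G => G.induce ({a, b, c} : Set (Fin n)) = ⊤
          ∧ G.induce ({d, e, f} : Set (Fin n)) = ⊤) = 5 / 128 := by
      rw [pr_congr (CC n) (Q := fun G => ((((G.Adj a b ∧ G.Adj a c) ∧ G.Adj b c) ∧ G.Adj d e)
          ∧ G.Adj d f) ∧ G.Adj e f) (fun G => by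
        rw [induce_triple_top_iff a b c hab hac hbc G,
          induce_triple_top_iff d e f hde hdf hef G]
        tauto)]
      exact pr_two_tri a b c d e f hab hac had hae haf hbc hbd hbe hbf hcd hce hcf hde hdf hef
    have e2 : pr (CC n) (fun G => G.induce ({a, b, c} : Set (Fin n)) = ⊤) = 3 / 16 := by
      rw [pr_congr (CC n) (Q := fun G => (G.Adj a b ∧ G.Adj a c) ∧ G.Adj b c)
        (fun G => induce_triple_top_iff a b c hab hac hbc G)]
      exact pr_tri a b c hab hac hbc
    have e3 : pr (CC n) (fun G => G.induce ({d, e, f} : Set (Fin n)) = ⊤) = 3 / 16 := by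
      rw [pr_congr (CC n) (Q := fun G => (G.Adj d e ∧ G.Adj d f) ∧ G.Adj e f)
        (fun G => induce_triple_top_iff d e f hde hdf hef G)]
      exact pr_tri d e f hde hdf hef
    rw [e1, e2, e3] at key
    norm_num at key
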